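/- (Euler's pentagonal number identity.) For every complex number q with |q| < 1, one has ∏_{n=1}^∞ (1 − q^n) = Σ_{j∈ℤ} (−1)^j q^{(3j² − j)/2}, with the product convergent and the series absolutely convergent. -/

import Mathlib

open Finset Filter Topology
namespace EulerPent



noncomputable def pent (q : ℂ) (n s : ℕ) : ℂ :=
  (-1) ^ s * q ^ (s * (s + 1) / 2 + n * s) * ∏ k ∈ Finset.Ico (s + 1) (n + 1), (1 - q ^ k)

noncomputable def Vv (q : ℂ) (n s : ℕ) : ℂ :=
  (-1) ^ s * q ^ (n * s + s * (s + 1) / 2) * ∏ k ∈ Finset.Ico s (n + 1), (1 - q ^ k)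

lemma tri_succ (s : ℕ) : (s + 1) * (s + 2) / 2 = s * (s + 1) / 2 + (s + 1) := by
  have h : (s + 1) * (s + 2) = s * (s + 1) + 2 * (s + 1) := by ring
  rw [h, Nat.add_mul_div_left _ _ (by norm_num : (0:ℕ) < 2)]

lemma step (q : ℂ) (n s : ℕ) (hs : s ≤ n) :
    pent q (n + 1) s - pent q n s = Vv q n (s + 1) - Vv q n s := by
  unfold pent Vv
  rw [Finset.prod_Ico_succ_top (by omega : s + 1 ≤ n + 1)]
  rw [Finset.prod_eq_prod_Ico_succ_bot (by omega : s < n + 1)]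
  rw [tri_succ]
  generalize s * (s + 1) / 2 = t
  generalize (∏ k ∈ Finset.Ico (s + 1) (n + 1), (1 - q ^ k)) = P
  ring

lemma Vv_zero (q : ℂ) (n : ℕ) : Vv q n 0 = 0 := by
  unfold Vv
  rw [Finset.prod_eq_zero (Finset.mem_Ico.2 ⟨le_refl 0, by omega⟩) (by simp)]
  ring



noncomputable def f (q : ℂ) (j : ℤ) : ℂ := (-1 : ℂ) ^ j * q ^ ((3 * j ^ 2 - j) / 2)

noncomputable def Sb (q : ℂ) (n : ℕ) : ℂ := ∑ j ∈ Finset.Icc (-(n : ℤ)) (n : ℤ), f q j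

lemma two_mul_half (a : ℕ) (h : Even a) : 2 * (a / 2) = a := Nat.mul_div_cancel' h.two_dvd

lemma f_pos (q : ℂ) (n : ℕ) :
    f q ((n : ℤ) + 1) = (-1) ^ (n + 1) * q ^ (n * (n + 1) + (n + 1) * (n + 2) / 2) := by
  unfold f
  set m := n * (n + 1) + (n + 1) * (n + 2) / 2 with hm
  have hnat : 2 * m = 2 * (n * (n + 1)) + (n + 1) * (n + 2) := by
    rw [hm, mul_add, two_mul_half _ (Nat.even_mul_succ_self (n + 1))]
  have hcast := congrArg (Nat.cast : ℕ → ℤ) hnat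
  push_cast at hcast
  have h2 : (3 * ((n : ℤ) + 1) ^ 2 - ((n : ℤ) + 1)) / 2 = (m : ℤ) := by
    have he : (3 * ((n : ℤ) + 1) ^ 2 - ((n : ℤ) + 1)) = 2 * (m : ℤ) := by
      linear_combination -hcast
    rw [he, Int.mul_ediv_cancel_left _ (by norm_num)]
  have h1 : ((n : ℤ) + 1) = ((n + 1 : ℕ) : ℤ) := by push_cast; ring
  rw [h2, h1, zpow_natCast, zpow_natCast]

lemma f_neg (q : ℂ) (n : ℕ) :
    f q (-((n : ℤ) + 1)) = (-1) ^ (n + 1) * q ^ ((n + 1) * (n + 2) / 2 + (n + 1) * (n + 1)) := by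
  unfold f
  set m := (n + 1) * (n + 2) / 2 + (n + 1) * (n + 1) with hm
  have hnat : 2 * m = (n + 1) * (n + 2) + 2 * ((n + 1) * (n + 1)) := by
    rw [hm, mul_add, two_mul_half _ (Nat.even_mul_succ_self (n + 1))]
  have hcast := congrArg (Nat.cast : ℕ → ℤ) hnat
  push_cast at hcast
  have h2 : (3 * (-((n : ℤ) + 1)) ^ 2 - (-((n : ℤ) + 1))) / 2 = (m : ℤ) := by
    have he : (3 * (-((n : ℤ) + 1)) ^ 2 - (-((n : ℤ) + 1))) = 2 * (m : ℤ) := by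
      linear_combination -hcast
    rw [he, Int.mul_ediv_cancel_left _ (by norm_num)]
  have h1 : (-((n : ℤ) + 1)) = -((n + 1 : ℕ) : ℤ) := by push_cast; ring
  rw [h2, h1, zpow_neg, zpow_natCast, zpow_natCast, ← inv_pow, inv_neg_one]

lemma Sb_succ (q : ℂ) (n : ℕ) :
    Sb q (n + 1) = Sb q n + f q ((n : ℤ) + 1) + f q (-((n : ℤ) + 1)) := by
  unfold Sb
  have hset : Finset.Icc (-((n:ℕ)+1 : ℤ)) (((n:ℕ)+1 : ℤ))
      = insert (-((n : ℤ) + 1)) (insert ((n : ℤ) + 1) (Finset.Icc (-(n : ℤ)) (n : ℤ))) := by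
    ext j
    simp only [Finset.mem_Icc, Finset.mem_insert]
    omega
  push_cast at hset ⊢
  rw [hset, Finset.sum_insert (by simp only [Finset.mem_insert, Finset.mem_Icc]; omega),
    Finset.sum_insert (by simp only [Finset.mem_Icc]; omega)]
  ring


lemma shanks (q : ℂ) (n : ℕ) : Sb q n = ∑ s ∈ Finset.range (n + 1), pent q n s := by
  induction n with
  | zero =>
    simp [Sb, f, pent]
  | succ n ih =>
    rw [Sb_succ, Finset.sum_range_succ]
    have hcongr : ∀ s ∈ Finset.range (n + 1),
        pent q (n + 1) s = pent q n s + (Vv q n (s + 1) - Vv q n s) := by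
      intro s hs
      have h := step q n s (Nat.lt_succ_iff.mp (Finset.mem_range.mp hs))
      linear_combination h
    have hstep : ∑ s ∈ Finset.range (n + 1), pent q (n + 1) s
        = (∑ s ∈ Finset.range (n + 1), pent q n s) + (Vv q n (n + 1) - Vv q n 0) := by
      rw [Finset.sum_congr rfl hcongr, Finset.sum_add_distrib,
        Finset.sum_range_sub (Vv q n)]
    have hV : Vv q n (n + 1) = f q ((n : ℤ) + 1) := by
      rw [f_pos]; unfold Vv; rw [Finset.Ico_self, Finset.prod_empty]; ring
    have hP : pent q (n + 1) (n + 1) = f q (-((n : ℤ) + 1)) := by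
      rw [f_neg]; unfold pent; rw [Finset.Ico_self, Finset.prod_empty]; ring
    rw [hstep, Vv_zero, ih, hV, hP]
    ring





lemma f_norm_le {q : ℂ} (hq : ‖q‖ < 1) (j : ℤ) : ‖f q j‖ ≤ ‖q‖ ^ j.natAbs := by
  unfold f
  have hdvd : (2 : ℤ) ∣ 3 * j ^ 2 - j := by
    rcases Int.even_or_odd j with ⟨m, hm⟩ | ⟨m, hm⟩
    · exact ⟨6 * m ^ 2 - m, by rw [hm]; ring⟩
    · exact ⟨6 * m ^ 2 + 5 * m + 1, by rw [hm]; ring⟩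
  set d := (3 * j ^ 2 - j) / 2 with hd
  have h2 : 3 * j ^ 2 - j = 2 * d := (Int.mul_ediv_cancel' hdvd).symm
  have habs : (j.natAbs : ℤ) ≤ d := by
    rcases le_or_gt 0 j with h | h
    · have : (j.natAbs : ℤ) = j := Int.natAbs_of_nonneg h
      nlinarith [mul_nonneg h h]
    · have : (j.natAbs : ℤ) = -j := Int.ofNat_natAbs_of_nonpos h.le
      nlinarith [mul_nonneg (neg_nonneg.2 h.le) (neg_nonneg.2 h.le)]
  have hd0 : 0 ≤ d := le_trans (by positivity) habs
  rw [norm_mul, norm_zpow, norm_zpow, norm_neg, norm_one, one_zpow, one_mul]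
  rw [show d = (d.toNat : ℤ) from (Int.toNat_of_nonneg hd0).symm, zpow_natCast]
  exact pow_le_pow_of_le_one (norm_nonneg q) hq.le (by omega)

lemma summable_norm_f {q : ℂ} (hq : ‖q‖ < 1) :
    Summable (fun j : ℤ => ‖(-1 : ℂ) ^ j * q ^ ((3 * j ^ 2 - j) / 2)‖) := by
  have hr : (0:ℝ) ≤ ‖q‖ := norm_nonneg q
  have hgeo : Summable (fun j : ℤ => ‖q‖ ^ j.natAbs) := by
    apply Summable.of_nat_of_neg_add_one
    · exact (summable_geometric_of_lt_one hr hq).congr (by simp)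
    · have h : ∀ n : ℕ, (-((n : ℤ) + 1)).natAbs = n + 1 := by intro n; omega
      exact ((summable_geometric_of_lt_one hr hq).mul_left ‖q‖).congr
        (by intro n; rw [h n, pow_succ]; ring)
  exact Summable.of_nonneg_of_le (fun j => norm_nonneg _) (fun j => f_norm_le hq j) hgeo

lemma mult {q : ℂ} (hq : ‖q‖ < 1) : Multipliable (fun n : ℕ => (1 - q ^ (n + 1))) := by
  have hr : (0:ℝ) ≤ ‖q‖ := norm_nonneg q
  have hlt : ∀ n : ℕ, ‖q ^ (n + 1)‖ < 1 := by
    intro n; rw [norm_pow]; exact pow_lt_one₀ hr hq n.succ_ne_zero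
  have hne : ∀ (_ : Unit) (n : ℕ), 1 - q ^ (n + 1) ≠ 0 := by
    intro _ n
    intro h
    have h1 : q ^ (n + 1) = 1 := by linear_combination -h
    have h2 := hlt n
    rw [h1] at h2
    simp at h2
  have hsum : ∀ (_ : Unit), Summable (fun n : ℕ => Complex.log (1 - q ^ (n + 1))) := by
    intro _
    set C : ℝ := (1 - ‖q‖)⁻¹ / 2 + 1 with hC
    apply Summable.of_norm_bounded (g := fun n : ℕ => C * ‖q‖ ^ (n + 1))
    · apply Summable.congr (((summable_geometric_of_lt_one hr hq).mul_left (C * ‖q‖)))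
      intro n; rw [pow_succ]; ring
    · intro n
      have hz : ‖-(q ^ (n + 1))‖ < 1 := by rw [norm_neg]; exact hlt n
      have h1 : (1 : ℂ) - q ^ (n + 1) = 1 + -(q ^ (n + 1)) := by ring
      rw [h1]
      refine le_trans (Complex.norm_log_one_add_le hz) ?_
      rw [norm_neg, norm_pow]
      set x : ℝ := ‖q‖ ^ (n + 1) with hx
      have hx0 : 0 ≤ x := by positivity
      have hxr : x ≤ ‖q‖ := pow_le_of_le_one hr hq.le n.succ_ne_zero
      have hinv : (1 - x)⁻¹ ≤ (1 - ‖q‖)⁻¹ := by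
        apply inv_anti₀ (by linarith) (by linarith)
      have hx1 : x ≤ 1 := le_of_lt (by rw [hx, ← norm_pow]; exact hlt n)
      calc x ^ 2 * (1 - x)⁻¹ / 2 + x
          ≤ x * (1 - ‖q‖)⁻¹ / 2 + x := by
            have : x ^ 2 * (1 - x)⁻¹ ≤ x * (1 - ‖q‖)⁻¹ := by
              apply mul_le_mul (by nlinarith) hinv (inv_nonneg.2 (by linarith)) hx0
            linarith
        _ = C * x := by rw [hC]; ring
  exact Complex.multipliable_of_summable_log (hsum ())


lemma pent_zero (q : ℂ) (n : ℕ) : pent q n 0 = ∏ i ∈ Finset.range n, (1 - q ^ (i + 1)) := by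
  unfold pent
  rw [Finset.prod_Ico_eq_prod_range]
  simp only [Nat.add_sub_cancel, pow_zero, Nat.zero_div, Nat.mul_zero, one_mul,
    Nat.zero_mul, Nat.add_zero]
  refine Finset.prod_congr rfl fun i _ => ?_
  have h : 0 + 1 + i = i + 1 := by omega
  rw [h]

lemma prod_bound {q : ℂ} (hq : ‖q‖ < 1) (a b : ℕ) :
    ∏ k ∈ Finset.Ico a b, ‖1 - q ^ k‖ ≤ Real.exp ((1 - ‖q‖)⁻¹) := by
  have hr : (0:ℝ) ≤ ‖q‖ := norm_nonneg q
  calc ∏ k ∈ Finset.Ico a b, ‖1 - q ^ k‖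
      ≤ ∏ k ∈ Finset.Ico a b, (1 + ‖q‖ ^ k) := by
        apply Finset.prod_le_prod (fun k _ => norm_nonneg _)
        intro k _
        calc ‖1 - q ^ k‖ ≤ ‖(1:ℂ)‖ + ‖q ^ k‖ := norm_sub_le _ _
          _ = 1 + ‖q‖ ^ k := by rw [norm_one, norm_pow]
    _ ≤ ∏ k ∈ Finset.Ico a b, Real.exp (‖q‖ ^ k) := by
        apply Finset.prod_le_prod
        · intro k _; positivity
        · intro k _
          have := Real.add_one_le_exp (‖q‖ ^ k)
          linarith
    _ = Real.exp (∑ k ∈ Finset.Ico a b, ‖q‖ ^ k) := (Real.exp_sum _ _).symm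
    _ ≤ Real.exp ((1 - ‖q‖)⁻¹) := by
        apply Real.exp_le_exp.2
        have := (summable_geometric_of_lt_one hr hq).sum_le_tsum (Finset.Ico a b)
          (fun k _ => by positivity)
        rwa [tsum_geometric_of_lt_one hr hq] at this

lemma pent_norm_le {q : ℂ} (hq : ‖q‖ < 1) (n s : ℕ) :
    ‖pent q n (s + 1)‖ ≤ Real.exp ((1 - ‖q‖)⁻¹) * ‖q‖ ^ n := by
  have hr : (0:ℝ) ≤ ‖q‖ := norm_nonneg q
  unfold pent
  rw [norm_mul, norm_mul, norm_pow, norm_neg, norm_one, one_pow, one_mul, norm_pow]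
  have h1 : ‖q‖ ^ ((s+1) * (s + 2) / 2 + n * (s + 1)) ≤ ‖q‖ ^ n := by
    apply pow_le_pow_of_le_one hr hq.le
    have : n * 1 ≤ n * (s + 1) := Nat.mul_le_mul_left n (by omega)
    omega
  calc ‖q‖ ^ ((s+1) * (s + 2) / 2 + n * (s + 1)) * ‖∏ k ∈ Finset.Ico (s + 1 + 1) (n + 1), (1 - q ^ k)‖
      ≤ ‖q‖ ^ n * Real.exp ((1 - ‖q‖)⁻¹) := by
        apply mul_le_mul h1 ?_ (norm_nonneg _) (by positivity)
        rw [norm_prod]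
        exact prod_bound hq _ _
    _ = Real.exp ((1 - ‖q‖)⁻¹) * ‖q‖ ^ n := by ring

lemma tendsto_RHS {q : ℂ} (hq : ‖q‖ < 1) :
    Tendsto (fun n : ℕ => ∑ s ∈ Finset.range (n + 1), pent q n s) atTop
      (𝓝 (∏' n : ℕ, (1 - q ^ (n + 1)))) := by
  have hr : (0:ℝ) ≤ ‖q‖ := norm_nonneg q
  set C : ℝ := Real.exp ((1 - ‖q‖)⁻¹) with hC
  have hsplit : ∀ n : ℕ, ∑ s ∈ Finset.range (n + 1), pent q n s
      = (∑ i ∈ Finset.range n, pent q n (i + 1)) + ∏ i ∈ Finset.range n, (1 - q ^ (i + 1)) := by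
    intro n
    rw [Finset.sum_range_succ', pent_zero]
  have hE : Tendsto (fun n : ℕ => ∑ i ∈ Finset.range n, pent q n (i + 1)) atTop (𝓝 0) := by
    have hbound : ∀ n : ℕ, ‖∑ i ∈ Finset.range n, pent q n (i + 1)‖
        ≤ (n : ℝ) * (C * ‖q‖ ^ n) := by
      intro n
      calc ‖∑ i ∈ Finset.range n, pent q n (i + 1)‖
          ≤ ∑ i ∈ Finset.range n, ‖pent q n (i + 1)‖ := norm_sum_le _ _
        _ ≤ ∑ _i ∈ Finset.range n, (C * ‖q‖ ^ n) := by
            apply Finset.sum_le_sum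
            intro i _
            exact pent_norm_le hq n i
        _ = (n : ℝ) * (C * ‖q‖ ^ n) := by
            rw [Finset.sum_const, Finset.card_range, nsmul_eq_mul]
    have hg : Tendsto (fun n : ℕ => (n : ℝ) * (C * ‖q‖ ^ n)) atTop (𝓝 0) := by
      have hr' : ‖(‖q‖ : ℝ)‖ < 1 := by rwa [Real.norm_eq_abs, abs_of_nonneg hr]
      have hs := (summable_pow_mul_geometric_of_norm_lt_one 1 hr').mul_left C
      have := hs.tendsto_atTop_zero
      apply this.congr
      intro n
      rw [pow_one]
      ring
    exact squeeze_zero_norm hbound hg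
  have hP : Tendsto (fun n : ℕ => ∏ i ∈ Finset.range n, (1 - q ^ (i + 1))) atTop
      (𝓝 (∏' n : ℕ, (1 - q ^ (n + 1)))) := (mult hq).hasProd.tendsto_prod_nat
  have := hE.add hP
  rw [zero_add] at this
  exact Tendsto.congr (fun n => (hsplit n).symm) this

lemma tendsto_Sb {q : ℂ} (hq : ‖q‖ < 1) :
    Tendsto (fun n : ℕ => Sb q n) atTop (𝓝 (∑' j : ℤ, f q j)) := by
  have hsummable : Summable (f q) := Summable.of_norm (summable_norm_f hq)
  have hs : HasSum (f q) (∑' j : ℤ, f q j) := hsummable.hasSum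
  have hT : Tendsto (fun n : ℕ => Finset.Icc (-(n : ℤ)) (n : ℤ)) atTop atTop := by
    apply tendsto_atTop_finset_of_monotone
    · intro a b hab
      apply Finset.Icc_subset_Icc
      · exact neg_le_neg (Int.ofNat_le.2 hab)
      · exact Int.ofNat_le.2 hab
    · intro j
      exact ⟨j.natAbs, Finset.mem_Icc.2 (by omega)⟩
  exact hs.comp hT

end EulerPent



/-- **Euler's pentagonal number identity.** For `|q| < 1`,
`∏_{n≥1} (1 - q^n) = ∑_{j∈ℤ} (-1)^j q^{(3j² - j)/2}`,
with the product convergent and the series absolutely convergent.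
(The exponents `(3j² - j)/2` are nonnegative integers, and `ℤ`-division is exact here.) -/
theorem euler_pentagonal_number_identity (q : ℂ) (hq : ‖q‖ < 1) :
    Multipliable (fun n : ℕ => (1 - q ^ (n + 1))) ∧
    Summable (fun j : ℤ => ‖(-1 : ℂ) ^ j * q ^ ((3 * j ^ 2 - j) / 2)‖) ∧
    (∏' n : ℕ, (1 - q ^ (n + 1))) = ∑' j : ℤ, (-1 : ℂ) ^ j * q ^ ((3 * j ^ 2 - j) / 2) := by
  refine ⟨EulerPent.mult hq, EulerPent.summable_norm_f hq, ?_⟩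
  have h1 := EulerPent.tendsto_Sb hq
  have h2 := EulerPent.tendsto_RHS hq
  have heq : (fun n : ℕ => EulerPent.Sb q n)
      = fun n : ℕ => ∑ s ∈ Finset.range (n + 1), EulerPent.pent q n s := by
    funext n
    exact EulerPent.shanks q n
  rw [heq] at h1
  exact (tendsto_nhds_unique h1 h2).symm
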